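/- Let H, F be real Hilbert spaces, E : H → H* the Riesz map of a coercive symmetric bounded bilinear form, N : F → H* bounded and injective, and j ∈ H*. If (V, f, Π) satisfies E V + E Π = −j, N* Π = 0, and E V = N f, then ⟨E V, V⟩ = −j(V). In particular, if V ≠ 0 then j(V) < 0, i.e., V is a descent direction for j. -/

import Mathlib

/-- Let `H, F` be real Hilbert spaces, `E : H → H*` the Riesz
map of a coercive, symmetric, bounded bilinear form, `N : F → H*` bounded and
injective with adjoint `N*`, and `j ∈ H*`. If `(V, f, P)` satisfies
`E V + E P = -j`, `N* P = 0` and `E V = N f`, then `⟨E V, V⟩ = -j(V)`; in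
particular if `V ≠ 0` then `j(V) < 0`, i.e. `V` is a descent direction. -/
theorem restricted_gradient_is_descent_direction
    {H F : Type*}
    [NormedAddCommGroup H] [InnerProductSpace ℝ H] [CompleteSpace H]
    [NormedAddCommGroup F] [InnerProductSpace ℝ F] [CompleteSpace F]
    (E : H →L[ℝ] (H →L[ℝ] ℝ))
    (c : ℝ) (hc : 0 < c) (hcoer : ∀ v, c * ‖v‖ ^ 2 ≤ E v v)
    (hsym : ∀ v w, E v w = E w v)
    (N : F →L[ℝ] (H →L[ℝ] ℝ)) (hN : Function.Injective N)
    (Nstar : H →L[ℝ] F) (hadj : ∀ (f : F) (w : H), N f w = (inner ℝ f (Nstar w) : ℝ))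
    (j : H →L[ℝ] ℝ) (V : H) (f : F) (P : H)
    (h1 : E V + E P = -j) (h2 : Nstar P = 0) (h3 : E V = N f) :
    E V V = -(j V) ∧ (V ≠ 0 → j V < 0) := by
  have hEVP : E V P = 0 := by
    rw [h3, hadj, h2, inner_zero_right]
  have hkey : E V V = -(j V) := by
    have := congrArg (fun T => T V) h1
    simp only [ContinuousLinearMap.add_apply, ContinuousLinearMap.neg_apply] at this
    rw [hsym P V, hEVP, add_zero] at this
    exact this
  refine ⟨hkey, fun hV => ?_⟩
  have hpos : 0 < E V V := lt_of_lt_of_le (mul_pos hc (pow_pos (norm_pos_iff.mpr hV) 2)) (hcoer V)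
  linarith [hkey]
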